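/- Let ℙ_u and ℙ_n be compactly supported Borel probability measures on ℝⁿ, and define the 1-Wasserstein distance by its dual formulation W(μ, ν) = sup { ∫ f dμ − ∫ f dν : f : ℝⁿ → ℝ is 1-Lipschitz }. Let Ψ : ℝⁿ → ℝ be a continuously differentiable 1-Lipschitz function that attains this supremum for the pair (ℙ_n, ℙ_u), i.e. W(ℙ_u, ℙ_n) = ∫ Ψ dℙ_n − ∫ Ψ dℙ_u, and suppose ∫ ‖∇Ψ‖² dℙ_n = 1. For η ≥ 0 define g_η(u) = u − η·∇Ψ(u) and ℙ_η = (g_η)_#ℙ_n, and suppose the function η ↦ W(ℙ_u, ℙ_η) admits a left and a right derivative at η = 0 and they are equal. Then d/dη W(ℙ_u, ℙ_η)|_{η=0} = −∫ ‖∇Ψ‖² dℙ_n = −1. -/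

import Mathlib

open MeasureTheory Filter Topology

/-- The 1-Wasserstein distance via its Kantorovich dual formulation:
supremum over 1-Lipschitz functions `f` of `∫ f dμ − ∫ f dν`. -/
noncomputable def wass1 {n : ℕ}
    (μ ν : Measure (EuclideanSpace ℝ (Fin n))) : ℝ :=
  ⨆ f : {f : EuclideanSpace ℝ (Fin n) → ℝ // LipschitzWith 1 f},
    (∫ x, f.1 x ∂μ) - ∫ x, f.1 x ∂ν

section Aux

variable {n : ℕ}

lemma lip_integrable {μ : Measure (EuclideanSpace ℝ (Fin n))} [IsFiniteMeasure μ]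
    (hsupp : ∃ K : Set (EuclideanSpace ℝ (Fin n)), IsCompact K ∧ μ Kᶜ = 0)
    {f : EuclideanSpace ℝ (Fin n) → ℝ} (hf : LipschitzWith 1 f) :
    Integrable f μ := by
  obtain ⟨K, hK, h0⟩ := hsupp
  obtain ⟨R, hR⟩ := hK.isBounded.subset_closedBall 0
  have hae : ∀ᵐ x ∂μ, x ∈ K := by
    rw [MeasureTheory.ae_iff]
    simpa [Set.compl_def] using h0
  refine Integrable.mono' (integrable_const (‖f 0‖ + R)) hf.continuous.aestronglyMeasurable ?_
  filter_upwards [hae] with x hx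
  have h1 : dist (f x) (f 0) ≤ 1 * dist x 0 := hf.dist_le_mul x 0
  have h2 : dist x 0 ≤ R := by simpa [Metric.mem_closedBall] using hR hx
  have h3 : |f x - f 0| ≤ R := by rw [← Real.dist_eq]; linarith
  calc ‖f x‖ = |f 0 + (f x - f 0)| := by rw [Real.norm_eq_abs]; ring_nf
    _ ≤ |f 0| + |f x - f 0| := abs_add_le _ _
    _ ≤ ‖f 0‖ + R := by rw [Real.norm_eq_abs]; linarith

lemma lip_integral_le {μ : Measure (EuclideanSpace ℝ (Fin n))} [IsProbabilityMeasure μ]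
    {K : Set (EuclideanSpace ℝ (Fin n))} (hK : IsCompact K) (h0 : μ Kᶜ = 0)
    {R : ℝ} (hR : K ⊆ Metric.closedBall 0 R)
    {f : EuclideanSpace ℝ (Fin n) → ℝ} (hf : LipschitzWith 1 f) :
    ∫ x, f x ∂μ ≤ f 0 + R := by
  have hint : Integrable f μ := lip_integrable ⟨K, hK, h0⟩ hf
  have hae : ∀ᵐ x ∂μ, x ∈ K := by
    rw [MeasureTheory.ae_iff]; simpa [Set.compl_def] using h0
  have hle : ∀ᵐ x ∂μ, f x ≤ f 0 + R := by
    filter_upwards [hae] with x hx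
    have h1 : dist (f x) (f 0) ≤ 1 * dist x 0 := hf.dist_le_mul x 0
    have h2 : dist x 0 ≤ R := by simpa [Metric.mem_closedBall] using hR hx
    have h3 : f x - f 0 ≤ dist (f x) (f 0) := by
      rw [Real.dist_eq]; exact le_abs_self _
    linarith
  calc ∫ x, f x ∂μ ≤ ∫ _x, (f 0 + R) ∂μ := integral_mono_ae hint (integrable_const _) hle
    _ = f 0 + R := by simp

lemma lip_integral_ge {μ : Measure (EuclideanSpace ℝ (Fin n))} [IsProbabilityMeasure μ]
    {K : Set (EuclideanSpace ℝ (Fin n))} (hK : IsCompact K) (h0 : μ Kᶜ = 0)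
    {R : ℝ} (hR : K ⊆ Metric.closedBall 0 R)
    {f : EuclideanSpace ℝ (Fin n) → ℝ} (hf : LipschitzWith 1 f) :
    f 0 - R ≤ ∫ x, f x ∂μ := by
  have h := lip_integral_le hK h0 hR (hf.neg)
  simp only [Pi.neg_apply] at h
  rw [integral_neg] at h
  linarith

lemma wass1_le {μ ν : Measure (EuclideanSpace ℝ (Fin n))}
    [IsProbabilityMeasure μ] [IsProbabilityMeasure ν]
    (hμ : ∃ K : Set (EuclideanSpace ℝ (Fin n)), IsCompact K ∧ μ Kᶜ = 0)
    (hν : ∃ K : Set (EuclideanSpace ℝ (Fin n)), IsCompact K ∧ ν Kᶜ = 0)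
    {f : EuclideanSpace ℝ (Fin n) → ℝ} (hf : LipschitzWith 1 f) :
    (∫ x, f x ∂ν) - ∫ x, f x ∂μ ≤ wass1 μ ν := by
  obtain ⟨K₁, hK₁, h₁⟩ := hμ
  obtain ⟨K₂, hK₂, h₂⟩ := hν
  obtain ⟨R₁, hR₁⟩ := hK₁.isBounded.subset_closedBall 0
  obtain ⟨R₂, hR₂⟩ := hK₂.isBounded.subset_closedBall 0
  have hbdd : BddAbove (Set.range fun f : {f : EuclideanSpace ℝ (Fin n) → ℝ //
      LipschitzWith 1 f} => (∫ x, f.1 x ∂μ) - ∫ x, f.1 x ∂ν) := by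
    refine ⟨R₁ + R₂, ?_⟩
    rintro y ⟨g, rfl⟩
    have hub := lip_integral_le hK₁ h₁ hR₁ g.2
    have hlb := lip_integral_ge hK₂ h₂ hR₂ g.2
    dsimp only
    linarith
  have := le_ciSup hbdd ⟨fun x => -f x, hf.neg⟩
  simp only [integral_neg] at this
  unfold wass1
  linarith

end Aux

/-- **Gradient descent on an optimal Kantorovich potential decreases the
Wasserstein distance at unit speed.** If `Ψ` is a `C¹`, 1-Lipschitz maximizer of
the dual problem for `W(ℙ_u, ℙ_n)` with `∫‖∇Ψ‖² dℙ_n = 1`, `g_η(u) = u − η∇Ψ(u)`,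
`ℙ_η = (g_η)_#ℙ_n`, and `η ↦ W(ℙ_u, ℙ_η)` has equal one-sided derivatives at
`η = 0`, then `d/dη W(ℙ_u, ℙ_η)|₀ = −∫‖∇Ψ‖² dℙ_n = −1`. -/
theorem stmt6 {n : ℕ}
    (Pu Pn : Measure (EuclideanSpace ℝ (Fin n)))
    [IsProbabilityMeasure Pu] [IsProbabilityMeasure Pn]
    (hPusupp : ∃ K : Set (EuclideanSpace ℝ (Fin n)), IsCompact K ∧ Pu Kᶜ = 0)
    (hPnsupp : ∃ K : Set (EuclideanSpace ℝ (Fin n)), IsCompact K ∧ Pn Kᶜ = 0)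
    (Ψ : EuclideanSpace ℝ (Fin n) → ℝ)
    (hΨC1 : ContDiff ℝ 1 Ψ) (hΨlip : LipschitzWith 1 Ψ)
    (hΨopt : wass1 Pu Pn = (∫ x, Ψ x ∂Pn) - ∫ x, Ψ x ∂Pu)
    (hΨnorm : (∫ x, ‖gradient Ψ x‖ ^ 2 ∂Pn) = 1)
    (W : ℝ → ℝ)
    (hW : ∀ η : ℝ,
      W η = wass1 Pu (Measure.map (fun u => u - η • gradient Ψ u) Pn))
    (hderiv : ∃ d : ℝ,
      HasDerivWithinAt W d (Set.Iic 0) 0 ∧ HasDerivWithinAt W d (Set.Ici 0) 0) :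
    HasDerivAt W (-(∫ x, ‖gradient Ψ x‖ ^ 2 ∂Pn)) 0 ∧
      -(∫ x, ‖gradient Ψ x‖ ^ 2 ∂Pn) = -1 := by
  classical
  obtain ⟨d, hdL, hdR⟩ := hderiv
  -- basic facts about Ψ and its gradient
  have hdiffΨ : Differentiable ℝ Ψ := hΨC1.differentiable one_ne_zero
  have hgrad_def : ∀ x, gradient Ψ x =
      (InnerProductSpace.toDual ℝ _).symm (fderiv ℝ Ψ x) := fun _ => rfl
  have hgradcont : Continuous (gradient Ψ) := by
    have heq : gradient Ψ =
        fun x => (InnerProductSpace.toDual ℝ _).symm (fderiv ℝ Ψ x) := rfl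
    rw [heq]
    exact (InnerProductSpace.toDual ℝ _).symm.continuous.comp
      (hΨC1.continuous_fderiv one_ne_zero)
  have hgradle : ∀ x, ‖gradient Ψ x‖ ≤ 1 := by
    intro x
    rw [hgrad_def, LinearIsometryEquiv.norm_map]
    simpa using norm_fderiv_le_of_lipschitz ℝ hΨlip (x₀ := x)
  have hfderiv_apply : ∀ x y, fderiv ℝ Ψ x y = inner ℝ (gradient Ψ x) y := by
    intro x y
    rw [hgrad_def, InnerProductSpace.toDual_symm_apply]
  -- continuity of the flow maps
  have hgcont : ∀ η : ℝ, Continuous (fun u => u - η • gradient Ψ u) :=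
    fun η => continuous_id.sub (hgradcont.const_smul η)
  -- the auxiliary function h
  set h : ℝ → ℝ := fun η => ∫ x, Ψ (x - η • gradient Ψ x) ∂Pn with hh
  -- derivative of h at 0
  have hΨint : Integrable Ψ Pn := lip_integrable hPnsupp hΨlip
  have hhderiv : HasDerivAt h (∫ x, -(‖gradient Ψ x‖ ^ 2) ∂Pn) 0 := by
    have key := hasDerivAt_integral_of_dominated_loc_of_lip
      (F := fun η (x : EuclideanSpace ℝ (Fin n)) => Ψ (x - η • gradient Ψ x))
      (F' := fun x => -(‖gradient Ψ x‖ ^ 2)) (x₀ := (0:ℝ)) (μ := Pn)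
      (bound := fun _ => (1:ℝ)) (s := Metric.ball (0:ℝ) 1) (Metric.ball_mem_nhds _ one_pos)
      (Eventually.of_forall fun η =>
        ((hΨlip.continuous.comp (hgcont η)).aestronglyMeasurable))
      (by simpa using hΨint)
      (((continuous_norm.comp hgradcont).pow 2).neg.aestronglyMeasurable)
      (Eventually.of_forall ?_) (integrable_const 1) (Eventually.of_forall ?_)
    · exact key.2
    · intro a
      have hlipc : LipschitzWith (‖gradient Ψ a‖₊) (fun η : ℝ => a - η • gradient Ψ a) := by
        apply LipschitzWith.of_dist_le_mul
        intro x y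
        rw [dist_eq_norm, dist_eq_norm]
        have : a - x • gradient Ψ a - (a - y • gradient Ψ a) = (y - x) • gradient Ψ a := by
          module
        rw [this, norm_smul]
        simp [Real.norm_eq_abs, abs_sub_comm, mul_comm]
      have hcomp : LipschitzWith (1 * ‖gradient Ψ a‖₊)
          (fun η : ℝ => Ψ (a - η • gradient Ψ a)) := hΨlip.comp hlipc
      have hle : (1 * ‖gradient Ψ a‖₊ : NNReal) ≤ Real.nnabs 1 := by
        have h1 : (Real.nnabs 1 : NNReal) = 1 := by
          rw [Real.nnabs_of_nonneg zero_le_one, Real.toNNReal_one]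
        rw [one_mul, h1, ← NNReal.coe_le_coe]
        simpa [coe_nnnorm] using hgradle a
      exact (hcomp.weaken hle).lipschitzOnWith
    · intro a
      have hγ : HasDerivAt (fun η : ℝ => a - η • gradient Ψ a) (-(gradient Ψ a)) 0 := by
        have : HasDerivAt (fun η : ℝ => η • gradient Ψ a) ((1:ℝ) • gradient Ψ a) 0 :=
          (hasDerivAt_id 0).smul_const (gradient Ψ a)
        simpa using this.const_sub a
      have hΨ' : HasFDerivAt Ψ (fderiv ℝ Ψ (a - (0:ℝ) • gradient Ψ a))
          (a - (0:ℝ) • gradient Ψ a) := (hdiffΨ _).hasFDerivAt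
      have hcomp := hΨ'.comp_hasDerivAt 0 hγ
      convert hcomp using 1
      · rfl
      rw [show a - (0:ℝ) • gradient Ψ a = a by simp, hfderiv_apply]
      rw [inner_neg_right, real_inner_self_eq_norm_sq]
  -- value of h at 0
  have hh0 : h 0 = ∫ x, Ψ x ∂Pn := by
    simp [hh]
  -- key inequality: h η - ∫ Ψ ∂Pu ≤ W η for every η
  have hkey : ∀ η : ℝ, h η - ∫ x, Ψ x ∂Pu ≤ W η := by
    intro η
    rw [hW η]
    set g := fun u : EuclideanSpace ℝ (Fin n) => u - η • gradient Ψ u with hg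
    have hgmeas : Measurable g := (hgcont η).measurable
    haveI : IsProbabilityMeasure (Measure.map g Pn) :=
      Measure.isProbabilityMeasure_map hgmeas.aemeasurable
    have hsupp' : ∃ K : Set (EuclideanSpace ℝ (Fin n)), IsCompact K ∧
        (Measure.map g Pn) Kᶜ = 0 := by
      obtain ⟨K, hK, h0⟩ := hPnsupp
      refine ⟨g '' K, hK.image (hgcont η), ?_⟩
      rw [Measure.map_apply hgmeas (((hK.image (hgcont η)).isClosed.isOpen_compl).measurableSet)]
      refine measure_mono_null ?_ h0
      intro x hx
      simp only [Set.mem_preimage, Set.mem_compl_iff] at hx ⊢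
      exact fun hxK => hx (Set.mem_image_of_mem g hxK)
    have := wass1_le hPusupp hsupp' hΨlip
    have hmap : (∫ x, Ψ x ∂(Measure.map g Pn)) = h η := by
      rw [integral_map hgmeas.aemeasurable hΨlip.continuous.aestronglyMeasurable]
    linarith [hmap ▸ this]
  -- W at 0
  have hW0 : W 0 = h 0 - ∫ x, Ψ x ∂Pu := by
    rw [hW 0]
    have : (fun u : EuclideanSpace ℝ (Fin n) => u - (0:ℝ) • gradient Ψ u) = id := by
      funext u; simp
    rw [this, Measure.map_id, hΨopt, hh0]
  -- the function F = W - h has a global minimum at 0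
  set F : ℝ → ℝ := fun η => W η - h η with hF
  have hFmin : ∀ η, F 0 ≤ F η := by
    intro η
    have := hkey η
    simp only [hF, hW0]
    linarith
  have hInt : (∫ x, -(‖gradient Ψ x‖ ^ 2) ∂Pn) = -1 := by
    rw [integral_neg, hΨnorm]
  -- one-sided derivatives of F
  have hFderivR : HasDerivWithinAt F (d - (-1)) (Set.Ici 0) 0 := by
    have := hdR.sub ((hInt ▸ hhderiv).hasDerivWithinAt (s := Set.Ici 0))
    exact this
  have hFderivL : HasDerivWithinAt F (d - (-1)) (Set.Iic 0) 0 := by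
    exact hdL.sub ((hInt ▸ hhderiv).hasDerivWithinAt (s := Set.Iic 0))
  -- right derivative at a min is nonnegative
  have hdge : 0 ≤ d - (-1) := by
    have htend := hasDerivWithinAt_iff_tendsto_slope.mp hFderivR
    rw [Set.Ici_sdiff_left] at htend
    refine ge_of_tendsto htend ?_
    filter_upwards [self_mem_nhdsWithin] with η hη
    have hpos : (0:ℝ) < η := hη
    rw [slope_def_field]
    apply div_nonneg
    · linarith [hFmin η]
    · linarith
  have hdle : d - (-1) ≤ 0 := by
    have htend := hasDerivWithinAt_iff_tendsto_slope.mp hFderivL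
    rw [Set.Iic_diff_right] at htend
    refine le_of_tendsto htend ?_
    filter_upwards [self_mem_nhdsWithin] with η hη
    have hneg : η < (0:ℝ) := hη
    rw [slope_def_field]
    apply div_nonpos_of_nonneg_of_nonpos
    · linarith [hFmin η]
    · linarith
  have hdeq : d = -1 := by linarith
  have hneg1 : -(∫ x, ‖gradient Ψ x‖ ^ 2 ∂Pn) = -1 := by rw [hΨnorm]
  refine ⟨?_, hneg1⟩
  rw [hneg1, ← hdeq]
  have := hdL.union hdR
  rw [Set.Iic_union_Ici] at this
  exact this.hasDerivAt (by simp)
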